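/- Let β > 0, γ = β²/2, δ = β²/(2(1+β²)), and let h : ℝ → ℝ be such that x ↦ (1 + x²) h(x) is Lebesgue integrable. Then ∬_{ℝ²} e^{-γ(x-y)²} (x-y)² h(x) φ(y) dx dy = (1+β²)^{-5/2} ∫_{ℝ} e^{-δ x²} (x² + β² + 1) h(x) dx. -/

import Mathlib

open MeasureTheory Real

/-- The standard normal density `φ(x) = (2π)^{-1/2} e^{-x²/2}`. -/
noncomputable def stdNormalPDF (x : ℝ) : ℝ :=
  (Real.sqrt (2 * Real.pi))⁻¹ * Real.exp (-x ^ 2 / 2)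

open Filter

lemma integrable_sq_exp {b : ℝ} (hb : 0 < b) :
    Integrable (fun u : ℝ => u ^ 2 * Real.exp (-b * u ^ 2)) := by
  have := integrable_rpow_mul_exp_neg_mul_sq hb (s := 2) (by norm_num)
  simpa [Real.rpow_natCast, sq_abs] using this

lemma integral_self_mul_exp {b : ℝ} (hb : 0 < b) :
    ∫ u : ℝ, u * Real.exp (-b * u ^ 2) = 0 := by
  have hderiv : ∀ u : ℝ, HasDerivAt (fun u : ℝ => -(2 * b)⁻¹ * Real.exp (-b * u ^ 2))
      (u * Real.exp (-b * u ^ 2)) u := by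
    intro u
    have h1 : HasDerivAt (fun u : ℝ => -b * u ^ 2) (-b * (2 * u)) u := by
      simpa using ((hasDerivAt_pow 2 u).const_mul (-b))
    have h2 := (h1.exp).const_mul (-(2 * b)⁻¹)
    refine h2.congr_deriv ?_
    field_simp
  exact integral_eq_zero_of_hasDerivAt_of_integrable hderiv
    (integrable_mul_exp_neg_mul_sq hb)
    ((integrable_exp_neg_mul_sq hb).const_mul _)

lemma integral_sq_mul_exp {b : ℝ} (hb : 0 < b) :
    ∫ u : ℝ, u ^ 2 * Real.exp (-b * u ^ 2) = (2 * b)⁻¹ * Real.sqrt (π / b) := by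
  have hderiv : ∀ u : ℝ, HasDerivAt (fun u : ℝ => u * Real.exp (-b * u ^ 2))
      (Real.exp (-b * u ^ 2) - 2 * b * (u ^ 2 * Real.exp (-b * u ^ 2))) u := by
    intro u
    have h1 : HasDerivAt (fun u : ℝ => -b * u ^ 2) (-b * (2 * u)) u := by
      simpa using ((hasDerivAt_pow 2 u).const_mul (-b))
    have h2 := (hasDerivAt_id u).mul h1.exp
    refine HasDerivAt.congr_deriv (f := fun u : ℝ => u * Real.exp (-b * u ^ 2)) h2 ?_
    simp only [id]
    ring
  have hint : Integrable (fun u : ℝ =>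
      Real.exp (-b * u ^ 2) - 2 * b * (u ^ 2 * Real.exp (-b * u ^ 2))) :=
    (integrable_exp_neg_mul_sq hb).sub ((integrable_sq_exp hb).const_mul _)
  have h0 := integral_eq_zero_of_hasDerivAt_of_integrable hderiv hint
    (integrable_mul_exp_neg_mul_sq hb)
  rw [integral_sub (integrable_exp_neg_mul_sq hb) ((integrable_sq_exp hb).const_mul _),
    integral_const_mul, integral_gaussian] at h0
  have hb' : (2 : ℝ) * b ≠ 0 := by positivity
  field_simp at h0 ⊢
  linarith

lemma integral_shift_sq_exp {a : ℝ} (ha : 0 < a) (c : ℝ) :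
    ∫ u : ℝ, (c - u) ^ 2 * Real.exp (-a * u ^ 2)
      = (c ^ 2 + (2 * a)⁻¹) * Real.sqrt (π / a) := by
  have heq : (fun u : ℝ => (c - u) ^ 2 * Real.exp (-a * u ^ 2))
      = fun u : ℝ => (c ^ 2 * Real.exp (-a * u ^ 2) + u ^ 2 * Real.exp (-a * u ^ 2))
          - (2 * c) * (u * Real.exp (-a * u ^ 2)) := by
    funext u; ring
  have i0 : Integrable (fun u : ℝ => c ^ 2 * Real.exp (-a * u ^ 2)) :=
    (integrable_exp_neg_mul_sq ha).const_mul _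
  have i2 := integrable_sq_exp ha
  have i1 : Integrable (fun u : ℝ =>
      c ^ 2 * Real.exp (-a * u ^ 2) + u ^ 2 * Real.exp (-a * u ^ 2)) := i0.add i2
  have i3 : Integrable (fun u : ℝ => (2 * c) * (u * Real.exp (-a * u ^ 2))) :=
    (integrable_mul_exp_neg_mul_sq ha).const_mul _
  rw [heq, integral_sub i1 i3, integral_add i0 i2, integral_const_mul, integral_const_mul,
    integral_gaussian, integral_self_mul_exp ha, integral_sq_mul_exp ha]
  ring

lemma inner_integral_eq (β : ℝ) (hβ : 0 < β) (γ δ : ℝ)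
    (hγ : γ = β ^ 2 / 2) (hδ : δ = β ^ 2 / (2 * (1 + β ^ 2))) (x : ℝ) :
    ∫ y : ℝ, Real.exp (-γ * (x - y) ^ 2) * (x - y) ^ 2 * stdNormalPDF y
      = (1 + β ^ 2) ^ (-(5 / 2) : ℝ) * (Real.exp (-δ * x ^ 2) * (x ^ 2 + β ^ 2 + 1)) := by
  set B : ℝ := 1 + β ^ 2 with hB
  have hB0 : 0 < B := by positivity
  set a : ℝ := B / 2 with ha
  have ha0 : 0 < a := by positivity
  set m : ℝ := β ^ 2 * x / B with hm
  set c : ℝ := x / B with hc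
  have key : ∀ y : ℝ, Real.exp (-γ * (x - y) ^ 2) * (x - y) ^ 2 * stdNormalPDF y
      = ((Real.sqrt (2 * π))⁻¹ * Real.exp (-δ * x ^ 2))
          * ((c - (y - m)) ^ 2 * Real.exp (-a * (y - m) ^ 2)) := by
    intro y
    have hxy : x - y = c - (y - m) := by
      simp only [hc, hm, hB]; field_simp; ring
    have hE : -γ * (x - y) ^ 2 + -y ^ 2 / 2 = -δ * x ^ 2 + -a * (y - m) ^ 2 := by
      simp only [hγ, hδ, ha, hm, hB]; field_simp; ring
    unfold stdNormalPDF
    rw [hxy]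
    calc Real.exp (-γ * (c - (y - m)) ^ 2) * (c - (y - m)) ^ 2
          * ((Real.sqrt (2 * π))⁻¹ * Real.exp (-y ^ 2 / 2))
        = (Real.sqrt (2 * π))⁻¹ * ((c - (y - m)) ^ 2
            * Real.exp (-γ * (c - (y - m)) ^ 2 + -y ^ 2 / 2)) := by
          rw [Real.exp_add]; ring
      _ = _ := by
          rw [← hxy, hE, Real.exp_add, hxy]; ring
  rw [integral_congr_ae (Filter.Eventually.of_forall key), integral_const_mul]
  have hshift : ∫ y : ℝ, (c - (y - m)) ^ 2 * Real.exp (-a * (y - m) ^ 2)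
      = ∫ u : ℝ, (c - u) ^ 2 * Real.exp (-a * u ^ 2) :=
    integral_sub_right_eq_self (fun u : ℝ => (c - u) ^ 2 * Real.exp (-a * u ^ 2)) m
  rw [hshift, integral_shift_sq_exp ha0 c]
  have hsqrt : Real.sqrt (π / a) = Real.sqrt (2 * π) / Real.sqrt B := by
    rw [show π / a = (2 * π) / B by rw [ha]; field_simp, Real.sqrt_div (by positivity)]
  have hrpow : B ^ (-(5 / 2 : ℝ)) = (Real.sqrt B)⁻¹ * (B ^ 2)⁻¹ := by
    have h2 : B ^ ((2 : ℕ) : ℝ) = B ^ (2 : ℕ) := Real.rpow_natCast B 2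
    rw [show (-(5 / 2 : ℝ)) = -(1 / 2) + -((2 : ℕ) : ℝ) by norm_num, Real.rpow_add hB0,
      Real.rpow_neg hB0.le, Real.rpow_neg hB0.le, h2, ← Real.sqrt_eq_rpow]
  have hsπ : Real.sqrt (2 * π) ≠ 0 := by positivity
  have hsB : Real.sqrt B ≠ 0 := by positivity
  have hBne : B ≠ 0 := ne_of_gt hB0
  rw [hsqrt, hrpow, show x ^ 2 + β ^ 2 + 1 = x ^ 2 + B by rw [hB]; ring,
    hc, ha]
  field_simp

lemma stdNormalPDF_continuous : Continuous stdNormalPDF := by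
  unfold stdNormalPDF; fun_prop

lemma stdNormalPDF_nonneg (x : ℝ) : 0 ≤ stdNormalPDF x := by
  unfold stdNormalPDF; positivity

lemma stdNormalPDF_integrable : Integrable stdNormalPDF := by
  have : stdNormalPDF = fun y : ℝ => (Real.sqrt (2 * π))⁻¹ * Real.exp (-(1/2 : ℝ) * y ^ 2) := by
    funext y; unfold stdNormalPDF; ring_nf
  rw [this]
  exact (integrable_exp_neg_mul_sq (by norm_num)).const_mul _

/-- for `β > 0`, `γ = β²/2`, `δ = β²/(2(1+β²))` and any `h : ℝ → ℝ` such
that `x ↦ (1+x²)h(x)` is Lebesgue integrable,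
`∬ e^{-γ(x-y)²} (x-y)² h(x) φ(y) dx dy = (1+β²)^{-5/2} ∫ e^{-δx²} (x²+β²+1) h(x) dx`. -/
theorem gaussian_smoothing_square_integral (β : ℝ) (hβ : 0 < β) (γ δ : ℝ)
    (hγ : γ = β ^ 2 / 2) (hδ : δ = β ^ 2 / (2 * (1 + β ^ 2)))
    (h : ℝ → ℝ) (hh : Integrable (fun x => (1 + x ^ 2) * h x)) :
    (∫ y : ℝ, ∫ x : ℝ, Real.exp (-γ * (x - y) ^ 2) * (x - y) ^ 2 * h x * stdNormalPDF y)
      = (1 + β ^ 2) ^ (-(5 / 2) : ℝ)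
          * ∫ x : ℝ, Real.exp (-δ * x ^ 2) * (x ^ 2 + β ^ 2 + 1) * h x := by
  have hγ0 : 0 < γ := by rw [hγ]; positivity
  have hmeas : AEStronglyMeasurable h volume := by
    have heq : h = fun x => (1 + x ^ 2)⁻¹ * ((1 + x ^ 2) * h x) := by
      funext x
      have h0 : (1 : ℝ) + x ^ 2 ≠ 0 := by positivity
      field_simp
    rw [heq]
    have hc : Continuous fun x : ℝ => (1 + x ^ 2)⁻¹ :=
      (continuous_const.add (continuous_pow 2)).inv₀ fun x => (by positivity : (0:ℝ) < 1 + x ^ 2).ne'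
    exact hc.aestronglyMeasurable.mul hh.aestronglyMeasurable
  have habs : Integrable (fun x => |h x|) := by
    refine hh.norm.mono' hmeas.norm ?_
    filter_upwards with x
    simp only [norm_norm, Real.norm_eq_abs, abs_mul, abs_abs]
    have h1 : |1 + x ^ 2| = 1 + x ^ 2 := abs_of_pos (by positivity)
    rw [h1]
    nlinarith [abs_nonneg (h x), sq_nonneg x]
  have hbound : ∀ t : ℝ, t ^ 2 * Real.exp (-γ * t ^ 2) ≤ γ⁻¹ := by
    intro t
    have h1 : γ * t ^ 2 + 1 ≤ Real.exp (γ * t ^ 2) := Real.add_one_le_exp _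
    have hmul : Real.exp (γ * t ^ 2) * Real.exp (-γ * t ^ 2) = 1 := by
      rw [← Real.exp_add]; ring_nf; exact Real.exp_zero
    have he := (Real.exp_pos (-γ * t ^ 2)).le
    have key : γ * (t ^ 2 * Real.exp (-γ * t ^ 2)) ≤ 1 := by
      nlinarith [mul_nonneg (mul_nonneg hγ0.le (sq_nonneg t)) he]
    have hγi := mul_inv_cancel₀ (ne_of_gt hγ0)
    nlinarith [mul_nonneg (sq_nonneg t) he]
  -- integrability of the double integrand on the product space
  set F : ℝ × ℝ → ℝ := fun p =>
    Real.exp (-γ * (p.2 - p.1) ^ 2) * (p.2 - p.1) ^ 2 * h p.2 * stdNormalPDF p.1 with hF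
  have hFmeas : AEStronglyMeasurable F (volume.prod volume) := by
    have hcont : Continuous fun p : ℝ × ℝ =>
        Real.exp (-γ * (p.2 - p.1) ^ 2) * (p.2 - p.1) ^ 2 := by fun_prop
    have hh2 : AEStronglyMeasurable (fun p : ℝ × ℝ => h p.2) (volume.prod volume) :=
      hmeas.comp_quasiMeasurePreserving Measure.quasiMeasurePreserving_snd
    exact ((hcont.aestronglyMeasurable.mul hh2).mul
      ((stdNormalPDF_continuous.comp continuous_fst).aestronglyMeasurable))
  have hFint : Integrable F (volume.prod volume) := by
    have hG : Integrable (fun p : ℝ × ℝ => stdNormalPDF p.1 * (γ⁻¹ * |h p.2|))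
        (volume.prod volume) := stdNormalPDF_integrable.mul_prod (habs.const_mul _)
    refine hG.mono' hFmeas ?_
    filter_upwards with p
    rw [hF]
    simp only [Real.norm_eq_abs, abs_mul]
    have h1 : |Real.exp (-γ * (p.2 - p.1) ^ 2)| * |(p.2 - p.1) ^ 2| ≤ γ⁻¹ := by
      rw [abs_of_pos (Real.exp_pos _), abs_of_nonneg (sq_nonneg _), mul_comm]
      exact hbound _
    have h2 : |stdNormalPDF p.1| = stdNormalPDF p.1 := abs_of_nonneg (stdNormalPDF_nonneg _)
    rw [h2]
    calc |Real.exp (-γ * (p.2 - p.1) ^ 2)| * |(p.2 - p.1) ^ 2| * |h p.2| * stdNormalPDF p.1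
        ≤ γ⁻¹ * |h p.2| * stdNormalPDF p.1 := by
          apply mul_le_mul_of_nonneg_right _ (stdNormalPDF_nonneg _)
          exact mul_le_mul_of_nonneg_right h1 (abs_nonneg _)
      _ = stdNormalPDF p.1 * (γ⁻¹ * |h p.2|) := by ring
  -- Fubini
  have hswap := integral_integral_swap
    (f := fun y x => Real.exp (-γ * (x - y) ^ 2) * (x - y) ^ 2 * h x * stdNormalPDF y) hFint
  rw [hswap]
  have hpull : ∀ x : ℝ,
      (∫ y : ℝ, Real.exp (-γ * (x - y) ^ 2) * (x - y) ^ 2 * h x * stdNormalPDF y)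
        = (1 + β ^ 2) ^ (-(5 / 2) : ℝ)
            * (Real.exp (-δ * x ^ 2) * (x ^ 2 + β ^ 2 + 1) * h x) := by
    intro x
    have : (fun y : ℝ => Real.exp (-γ * (x - y) ^ 2) * (x - y) ^ 2 * h x * stdNormalPDF y)
        = fun y : ℝ => h x * (Real.exp (-γ * (x - y) ^ 2) * (x - y) ^ 2 * stdNormalPDF y) := by
      funext y; ring
    rw [this, integral_const_mul, inner_integral_eq β hβ γ δ hγ hδ x]
    ring
  rw [integral_congr_ae (Filter.Eventually.of_forall hpull), integral_const_mul]
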